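/- Let P be a finite poset, 2-wide, parity-graded with parity rank function μ, and downward Eulerian, and let g : P → ℝ be an injective discrete Morse function such that whenever z < x ≺ y < w and g(x) < g(y), then g(z) < g(y) and g(x) < g(w). For each b ∈ P, let T(b) be the set of nonempty chains C of P containing b on which g attains its maximum at b. If b is critical for g, then Σ_{C ∈ T(b)} (−1)^{ℓ(C)} = (−1)^{μ(b)}. -/

import Mathlib

open Finset
open scoped Classical

variable {P : Type*}

/-- `P` is 2-wide: whenever `a ⋖ b ⋖ c` there is `d ≠ b` with `a ⋖ d ⋖ c`. -/
def TwoWide (P : Type*) [PartialOrder P] : Prop :=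
  ∀ a b c : P, a ⋖ b → b ⋖ c → ∃ d, d ≠ b ∧ a ⋖ d ∧ d ⋖ c

/-- `f` is a discrete Morse function. -/
def IsDMF [PartialOrder P] (f : P → ℝ) : Prop :=
  ∀ b : P, {a | a ⋖ b ∧ f b ≤ f a}.Subsingleton ∧ {c | b ⋖ c ∧ f c ≤ f b}.Subsingleton

/-- `b` is (discrete-)critical for `f`. -/
def IsCrit [PartialOrder P] (f : P → ℝ) (b : P) : Prop :=
  (∀ a, a ⋖ b → f a < f b) ∧ (∀ c, b ⋖ c → f b < f c)

/-- `μ` is a parity rank function. -/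
def ParityRank [PartialOrder P] (μ : P → ℕ) : Prop :=
  (∀ a, μ a ≤ 1) ∧ (∀ a, IsMin a → μ a = 0) ∧ ∀ a b : P, a ⋖ b → μ b = 1 - μ a

/-- Sum of `(-1)^(length C)` over all nonempty chains `C` of `P` satisfying `p`. -/
noncomputable def chainSum [PartialOrder P] [Fintype P] (p : Finset P → Prop) : ℤ :=
  ∑ C ∈ Finset.univ.filter
      (fun C : Finset P => C.Nonempty ∧ IsChain (· ≤ ·) (↑C : Set P) ∧ p C),
    (-1 : ℤ) ^ (C.card - 1)

/-- `P` is downward Eulerian with respect to `μ`. -/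
def DownEulerian [PartialOrder P] [Fintype P] (μ : P → ℕ) : Prop :=
  ∀ a : P, ¬ IsMin a →
    chainSum (fun C => ∀ x ∈ C, x < a) = (-1 : ℤ) ^ (μ a + 1) + 1


lemma chainSum_eq_zero {P : Type*} [PartialOrder P] [Fintype P] {p : Finset P → Prop}
    (h : ∀ C : Finset P, C.Nonempty → IsChain (· ≤ ·) (↑C : Set P) → ¬ p C) :
    chainSum p = 0 := by
  unfold chainSum
  refine (Finset.sum_congr ?_ fun _ _ => rfl).trans Finset.sum_empty
  exact Finset.filter_eq_empty_iff.mpr (fun C _ hC => h C hC.1 hC.2.1 hC.2.2)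

theorem stmt14 [PartialOrder P] [Fintype P] (hw : TwoWide P) (μ : P → ℕ)
    (hμ : ParityRank μ) (hE : DownEulerian μ) (g : P → ℝ) (hg : IsDMF g)
    (hinj : Function.Injective g)
    (hcond : ∀ z x y w : P, z < x → x ⋖ y → y < w → g x < g y → g z < g y ∧ g x < g w)
    (b : P) (hb : IsCrit g b) :
    chainSum (fun C => b ∈ C ∧ ∀ x ∈ C, g x ≤ g b) = (-1 : ℤ) ^ μ b := by

  classical
  -- existence of a cover below / covered above within an interval
  have exmax : ∀ a w : P, a < w → ∃ c, a ≤ c ∧ c ⋖ w := by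
    intro a w haw
    obtain ⟨c, hc, hmax⟩ : ∃ c ∈ (Finset.univ.filter fun x => a ≤ x ∧ x < w),
        ∀ y ∈ (Finset.univ.filter fun x => a ≤ x ∧ x < w), ¬ c < y := by
      obtain ⟨c, hc⟩ := Finset.exists_maximal
        (s := Finset.univ.filter fun x => a ≤ x ∧ x < w) ⟨a, by simp [haw]⟩
      exact ⟨c, hc.1, fun y hy hcy => hcy.not_ge (hc.2 hy hcy.le)⟩
    simp only [Finset.mem_filter, Finset.mem_univ, true_and] at hc
    exact ⟨c, hc.1, hc.2, fun y hcy hyw =>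
      hmax y (by simp [le_trans hc.1 hcy.le, hyw]) hcy⟩
  have exmin : ∀ a w : P, w < a → ∃ c, w ⋖ c ∧ c ≤ a := by
    intro a w haw
    obtain ⟨c, hc, hmin⟩ : ∃ c ∈ (Finset.univ.filter fun x => w < x ∧ x ≤ a),
        ∀ y ∈ (Finset.univ.filter fun x => w < x ∧ x ≤ a), ¬ y < c := by
      obtain ⟨c, hc⟩ := Finset.exists_minimal
        (s := Finset.univ.filter fun x => w < x ∧ x ≤ a) ⟨a, by simp [haw]⟩
      exact ⟨c, hc.1, fun y hy hyc => hyc.not_ge (hc.2 hy hyc.le)⟩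
    simp only [Finset.mem_filter, Finset.mem_univ, true_and] at hc
    exact ⟨c, ⟨hc.1, fun y hwy hyc =>
      hmin y (by simp [hwy, le_trans hyc.le hc.2]) hyc⟩, hc.2⟩
  -- Lemma A : everything above b has larger g-value
  have hA : ∀ w, b < w → g b < g w := by
    intro w
    induction w using WellFoundedLT.induction with
    | _ w IH =>
      intro hbw
      obtain ⟨c, hbc, hcw⟩ := exmax b w hbw
      rcases hbc.lt_or_eq with hbc | rfl
      · by_contra hcon
        push_neg at hcon
        obtain ⟨e, hbe, hec⟩ := exmax b c hbc
        obtain ⟨d, hdc, hed, hdw⟩ := hw e c w hec hcw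
        have hgd : g b < g d := IH d hdw.lt (lt_of_le_of_lt hbe hed.lt)
        have hgc : g b < g c := IH c hcw.lt hbc
        have heq := (hg w).1 (show c ∈ _ from ⟨hcw, le_trans hcon hgc.le⟩)
          (show d ∈ _ from ⟨hdw, le_trans hcon hgd.le⟩)
        exact hdc heq.symm
      · exact hb.2 w hcw
  -- Lemma B : everything below b has smaller g-value
  have hB : ∀ x, x < b → g x < g b := by
    intro x
    induction x using WellFoundedGT.induction with
    | _ x IH =>
      intro hxb
      obtain ⟨c, hxc, hcb⟩ := exmin b x hxb
      rcases hcb.lt_or_eq with hcb | rfl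
      · by_contra hcon
        push_neg at hcon
        obtain ⟨e, hce, heb⟩ := exmin b c hcb
        obtain ⟨d, hdc, hxd, hde⟩ := hw x c e hxc hce
        have hgd : g d < g b := IH d hxd.lt (lt_of_lt_of_le hde.lt heb)
        have hgc : g c < g b := IH c hxc.lt hcb
        have heq := (hg x).2 (show c ∈ _ from ⟨hxc, le_trans hgc.le hcon⟩)
          (show d ∈ _ from ⟨hxd, le_trans hgd.le hcon⟩)
        exact hdc heq.symm
      · exact hb.1 x hxc
  -- rewrite the filter set: g-bounded chains through b = chains with all elements ≤ b
  have hfil : ∀ C : Finset P,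
      (C.Nonempty ∧ IsChain (· ≤ ·) (↑C : Set P) ∧ b ∈ C ∧ ∀ x ∈ C, g x ≤ g b) ↔
      (C.Nonempty ∧ IsChain (· ≤ ·) (↑C : Set P) ∧ b ∈ C ∧ ∀ x ∈ C, x ≤ b) := by
    intro C
    constructor
    · rintro ⟨hne, hch, hbC, hgle⟩
      refine ⟨hne, hch, hbC, fun x hx => ?_⟩
      by_cases hxb : x = b
      · exact hxb.le
      · rcases hch (by exact_mod_cast hx) (by exact_mod_cast hbC) hxb with h | h
        · exact h
        · exact absurd (hgle x hx) (not_le.mpr (hA x (lt_of_le_of_ne h (Ne.symm hxb))))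
    · rintro ⟨hne, hch, hbC, hle⟩
      refine ⟨hne, hch, hbC, fun x hx => ?_⟩
      rcases (hle x hx).lt_or_eq with h | h
      · exact (hB x h).le
      · exact h ▸ le_refl _
  unfold chainSum
  simp only [hfil]
  set S := (Finset.univ.filter
      (fun C : Finset P => C.Nonempty ∧ IsChain (· ≤ ·) (↑C : Set P) ∧ b ∈ C ∧
        ∀ x ∈ C, x ≤ b)) with hSdef
  have hbS : ({b} : Finset P) ∈ S := by
    simp only [hSdef, Finset.mem_filter, Finset.mem_univ, true_and]
    refine ⟨⟨b, Finset.mem_singleton_self b⟩, ?_, Finset.mem_singleton_self b, ?_⟩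
    · simp only [Finset.coe_singleton]
      intro x hx y hy hne
      exact absurd ((Set.mem_singleton_iff.mp hx).trans
        (Set.mem_singleton_iff.mp hy).symm) hne
    · intro x hx; rw [Finset.mem_singleton] at hx; exact hx.le
  have key : ∑ C ∈ S.erase {b}, (-1 : ℤ) ^ (C.card - 1) =
      - chainSum (fun C => ∀ x ∈ C, x < b) := by
    unfold chainSum
    rw [← Finset.sum_neg_distrib]
    apply Finset.sum_nbij' (fun C => C.erase b) (fun C => insert b C)
    · intro C hC
      rw [Finset.mem_erase] at hC
      obtain ⟨hCne, hC⟩ := hC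
      simp only [hSdef, Finset.mem_filter, Finset.mem_univ, true_and] at hC ⊢
      obtain ⟨hne, hch, hbC, hle⟩ := hC
      have hex : ∃ x ∈ C, x ≠ b := by
        by_contra hcon
        push_neg at hcon
        exact hCne (Finset.eq_singleton_iff_unique_mem.mpr ⟨hbC, hcon⟩)
      obtain ⟨x, hxC, hxb⟩ := hex
      refine ⟨⟨x, Finset.mem_erase.mpr ⟨hxb, hxC⟩⟩, ?_, fun y hy => ?_⟩
      · exact hch.mono (by exact_mod_cast Finset.erase_subset b C)
      · rw [Finset.mem_erase] at hy
        exact lt_of_le_of_ne (hle y hy.2) hy.1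
    · intro C hC
      simp only [Finset.mem_filter, Finset.mem_univ, true_and] at hC
      obtain ⟨hne, hch, hlt⟩ := hC
      have hbnotin : b ∉ C := fun h => lt_irrefl b (hlt b h)
      rw [Finset.mem_erase]
      constructor
      · intro hcon
        obtain ⟨x, hx⟩ := hne
        have hxb : x = b := by
          have : x ∈ ({b} : Finset P) := hcon ▸ Finset.mem_insert_of_mem hx
          rwa [Finset.mem_singleton] at this
        exact hbnotin (hxb ▸ hx)
      · simp only [hSdef, Finset.mem_filter, Finset.mem_univ, true_and]
        refine ⟨⟨b, Finset.mem_insert_self b C⟩, ?_, Finset.mem_insert_self b C,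
          fun x hx => ?_⟩
        · rw [Finset.coe_insert]
          exact hch.insert (fun y hy _ => Or.inr (hlt y (by exact_mod_cast hy)).le)
        · rcases Finset.mem_insert.mp hx with h | h
          · exact h.le
          · exact (hlt x h).le
    · intro C hC
      rw [Finset.mem_erase] at hC
      have hbC : b ∈ C := by
        have := hC.2
        simp only [hSdef, Finset.mem_filter, Finset.mem_univ, true_and] at this
        exact this.2.2.1
      exact Finset.insert_erase hbC
    · intro C hC
      simp only [Finset.mem_filter, Finset.mem_univ, true_and] at hC
      exact Finset.erase_insert (fun h => lt_irrefl b (hC.2.2 b h))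
    · intro C hC
      rw [Finset.mem_erase] at hC
      obtain ⟨hCne, hC⟩ := hC
      simp only [hSdef, Finset.mem_filter, Finset.mem_univ, true_and] at hC
      obtain ⟨hne, hch, hbC, hle⟩ := hC
      have h2 : 2 ≤ C.card := by
        rw [Nat.succ_le_iff, Finset.one_lt_card]
        by_contra hcon
        push_neg at hcon
        exact hCne (Finset.eq_singleton_iff_unique_mem.mpr
          ⟨hbC, fun x hx => hcon x hx b hbC⟩)
      obtain ⟨m, hm⟩ : ∃ m, C.card = m + 2 := ⟨C.card - 2, by omega⟩
      rw [Finset.card_erase_of_mem hbC, hm]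
      have h1 : m + 2 - 1 = m + 1 := by omega
      have h0 : m + 1 - 1 = m := by omega
      rw [h1, h0, pow_succ]
      ring
  rw [← Finset.sum_erase_add S _ hbS, key, Finset.card_singleton]
  simp only [Nat.sub_self, pow_zero]
  by_cases hmin : IsMin b
  · rw [chainSum_eq_zero (fun C hne hch hlt => hmin.not_lt
      (hlt hne.choose hne.choose_spec)), hμ.2.1 b hmin]
    norm_num
  · rw [hE b hmin, pow_succ]
    ring
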